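/- Let A be a Hermitian positive definite matrix on a finite set E, K := A(I+A)⁻¹, Λ ⊆ E. Then A_{[Λ]} := K_Λ (I_Λ − K_Λ)⁻¹ satisfies A_{[Λ]} = A(Λ,Λ) − A(Λ,Λᶜ) (I+A)(Λᶜ,Λᶜ)⁻¹ A(Λᶜ,Λ). -/

import Mathlib

open Matrix ComplexOrder

private lemma posDef_one_add_aux {E : Type*} [Fintype E] [DecidableEq E]
    {A : Matrix E E ℂ} (hA : A.PosDef) : (1 + A : Matrix E E ℂ).PosDef := by
  refine .of_dotProduct_mulVec_pos (Matrix.isHermitian_one.add hA.1) fun x hx => ?_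
  rw [Matrix.add_mulVec, Matrix.one_mulVec, dotProduct_add]
  exact add_pos_of_nonneg_of_pos (dotProduct_star_self_nonneg x) (hA.dotProduct_mulVec_pos hx)

private lemma posDef_submatrix_aux {E F : Type*} [Fintype E] [DecidableEq E] [Fintype F]
    [DecidableEq F] {M : Matrix E E ℂ} (hM : M.PosDef) (f : F → E)
    (hf : Function.Injective f) : (M.submatrix f f).PosDef := by
  have key : M.submatrix f f
      = ((1 : Matrix E E ℂ).submatrix id f)ᴴ * M * ((1 : Matrix E E ℂ).submatrix id f) := by
    conv_lhs => rw [(by simp : M = 1 * M * 1)]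
    rw [submatrix_mul (he₂ := Function.bijective_id),
      submatrix_mul (he₂ := Function.bijective_id), submatrix_id_id]
    simp only [conjTranspose_submatrix, conjTranspose_one]
  refine .of_dotProduct_mulVec_pos (hM.1.submatrix f) fun x hx => ?_
  have hBx : (1 : Matrix E E ℂ).submatrix id f *ᵥ x ≠ 0 := by
    intro h0
    obtain ⟨i, hi⟩ := Function.ne_iff.mp hx
    apply hi
    have hxi : ((1 : Matrix E E ℂ).submatrix id f *ᵥ x) (f i) = x i := by
      simp only [mulVec, dotProduct, Matrix.submatrix_apply, id_eq, one_apply]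
      rw [Finset.sum_eq_single i]
      · simp
      · intro j _ hj
        rw [if_neg (fun h => hj (hf h.symm))]
        ring
      · simp
    rw [h0] at hxi
    exact hxi.symm
  rw [key]
  simpa only [star_mulVec, dotProduct_mulVec, vecMul_vecMul] using
    hM.dotProduct_mulVec_pos hBx

theorem stmt_10 {E : Type*} [Fintype E] [DecidableEq E]
    (A : Matrix E E ℂ) (hA : A.PosDef)
    (Λ : Finset E)
    (K : Matrix E E ℂ) (hK : K = A * (1 + A)⁻¹)
    (KΛ : Matrix ↥Λ ↥Λ ℂ)
    (hKΛ : KΛ = K.submatrix (fun i : ↥Λ => (i : E)) (fun i : ↥Λ => (i : E))) :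
    KΛ * (1 - KΛ)⁻¹
    = A.submatrix (fun i : ↥Λ => (i : E)) (fun i : ↥Λ => (i : E))
      - (A.submatrix (fun i : ↥Λ => (i : E)) (fun j : ↥(Λᶜ) => (j : E)))
        * ((1 + A).submatrix (fun i : ↥(Λᶜ) => (i : E)) (fun j : ↥(Λᶜ) => (j : E)))⁻¹
        * (A.submatrix (fun i : ↥(Λᶜ) => (i : E)) (fun j : ↥Λ => (j : E))) := by
  classical
  set B : Matrix E E ℂ := 1 + A with hBdef
  have hB : B.PosDef := posDef_one_add_aux hA
  have hBinv : B⁻¹.PosDef := hB.inv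
  letI : Invertible B := hB.isUnit.invertible
  set cΛ : ↥Λ → E := fun i => (i : E)
  set cΛc : ↥(Λᶜ) → E := fun i => (i : E)
  have hcΛ : Function.Injective cΛ := Subtype.coe_injective
  have hcΛc : Function.Injective cΛc := Subtype.coe_injective
  -- 1 - K = B⁻¹
  have hK' : (1 : Matrix E E ℂ) - K = B⁻¹ := by
    rw [hK, ← Matrix.mul_inv_of_invertible B, ← Matrix.sub_mul]
    rw [hBdef]
    simp
  set C : Matrix ↥Λ ↥Λ ℂ := (B⁻¹).submatrix cΛ cΛ with hCdef
  have hCpd : C.PosDef := posDef_submatrix_aux hBinv cΛ hcΛ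
  letI : Invertible C := hCpd.isUnit.invertible
  have hC : (1 : Matrix ↥Λ ↥Λ ℂ) - KΛ = C := by
    rw [hKΛ, hCdef, ← hK', ← Matrix.submatrix_one cΛ hcΛ]
    rfl
  -- LHS = C⁻¹ - 1
  have hLHS : KΛ * (1 - KΛ)⁻¹ = C⁻¹ - 1 := by
    have hKΛC : KΛ = 1 - C := by rw [← hC]; abel
    rw [hC, hKΛC, Matrix.sub_mul, Matrix.one_mul, Matrix.mul_inv_of_invertible C]
  rw [hLHS]
  -- block decomposition
  set e : ↥Λ ⊕ ↥(Λᶜ) ≃ E :=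
    (Equiv.sumCongr (Equiv.refl ↥Λ)
      (Equiv.subtypeEquivRight (fun x => Finset.mem_compl))).trans
      (Equiv.sumCompl (· ∈ Λ)) with hedef
  set P : Matrix ↥Λ ↥Λ ℂ := B.submatrix cΛ cΛ
  set Q : Matrix ↥Λ ↥(Λᶜ) ℂ := B.submatrix cΛ cΛc
  set R : Matrix ↥(Λᶜ) ↥Λ ℂ := B.submatrix cΛc cΛ
  set S : Matrix ↥(Λᶜ) ↥(Λᶜ) ℂ := B.submatrix cΛc cΛc
  have hSpd : S.PosDef := posDef_submatrix_aux hB cΛc hcΛc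
  letI : Invertible S := hSpd.isUnit.invertible
  have hMblocks : B.submatrix e e = fromBlocks P Q R S := by
    ext (i | i) (j | j) <;> rfl
  letI : Invertible (fromBlocks P Q R S) := by
    rw [← hMblocks]; exact submatrixEquivInvertible B e e
  letI : Invertible (P - Q * ⅟S * R) := invertibleOfFromBlocks₂₂Invertible P Q R S
  have hinv := invOf_fromBlocks₂₂_eq P Q R S
  have hfb : (fromBlocks P Q R S)⁻¹ = (B⁻¹).submatrix e e := by
    rw [← hMblocks, Matrix.inv_submatrix_equiv]
  have hC2 : C = ⅟(P - Q * ⅟S * R) := by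
    have h1 : ((B⁻¹).submatrix e e).toBlocks₁₁ = C := by ext i j; rfl
    rw [← h1, ← hfb, ← invOf_eq_nonsing_inv, hinv, toBlocks_fromBlocks₁₁]
  have hCinv : C⁻¹ = P - Q * ⅟S * R := by
    rw [hC2, invOf_eq_nonsing_inv,
      Matrix.nonsing_inv_nonsing_inv _ (Matrix.isUnit_det_of_invertible _)]
  rw [hCinv, invOf_eq_nonsing_inv]
  -- identify blocks
  have hP : P = 1 + A.submatrix cΛ cΛ := by
    rw [show P = (1 + A).submatrix cΛ cΛ from rfl, Matrix.submatrix_add,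
      Pi.add_apply, Pi.add_apply, Matrix.submatrix_one cΛ hcΛ]
  have hQ : Q = A.submatrix cΛ cΛc := by
    ext i j
    show (1 + A) (cΛ i) (cΛc j) = A (cΛ i) (cΛc j)
    have hne : cΛ i ≠ cΛc j := by
      intro h
      have := j.2
      rw [Finset.mem_compl] at this
      have h' : (i : E) = (j : E) := h
      exact this (h' ▸ i.2)
    simp [Matrix.one_apply_ne hne]
  have hR : R = A.submatrix cΛc cΛ := by
    ext i j
    show (1 + A) (cΛc i) (cΛ j) = A (cΛc i) (cΛ j)
    have hne : cΛc i ≠ cΛ j := by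
      intro h
      have := i.2
      rw [Finset.mem_compl] at this
      have h' : (i : E) = (j : E) := h
      exact this (h'.symm ▸ j.2)
    simp [Matrix.one_apply_ne hne]
  rw [hP, hQ, hR]
  show 1 + A.submatrix cΛ cΛ - A.submatrix cΛ cΛc * S⁻¹ * A.submatrix cΛc cΛ - 1 = _
  abel
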